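/- Let W be a 2-dimensional isotropic subspace of complexified Minkowski space ℂ¹¹ with W ∩ W̄ of complex dimension 1, and set E(W) = (W + W̄) ∩ ℝ^{10,1} (a 3-dimensional real space). Then the restriction of the Lorentz form to E(W) is degenerate with radical the real isotropic line underlying W ∩ W̄, and the induced form on E(W)/radical is positive definite; in particular the restricted form on E(W) has signature (2,0) with a 1-dimensional kernel. -/

import Mathlib

/-- The complexified Lorentz form of signature `(10,1)` on `ℂ¹¹`. -/
noncomputable def BLor (x y : Fin 11 → ℂ) : ℂ :=
  ∑ i : Fin 11, (if (i : ℕ) < 10 then (1 : ℂ) else -1) * x i * y i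

/-- The conjugate `W̄` of a complex subspace of `ℂ¹¹` (conjugation fixing `ℝ^{10,1}`). -/
noncomputable def conjSub (W : Submodule ℂ (Fin 11 → ℂ)) : Submodule ℂ (Fin 11 → ℂ) where
  carrier := {x | (fun i => (starRingEnd ℂ) (x i)) ∈ W}
  zero_mem' := by
    show (fun i : Fin 11 => (starRingEnd ℂ) ((0 : Fin 11 → ℂ) i)) ∈ W
    have h : (fun i : Fin 11 => (starRingEnd ℂ) ((0 : Fin 11 → ℂ) i)) = 0 := by
      funext i; simp
    rw [h]; exact W.zero_mem
  add_mem' := by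
    intro a b ha hb
    have := W.add_mem ha hb
    have h : (fun i : Fin 11 => (starRingEnd ℂ) ((a + b) i)) =
        (fun i => (starRingEnd ℂ) (a i)) + fun i => (starRingEnd ℂ) (b i) := by
      funext i; simp
    simpa [Set.mem_setOf_eq, h]
  smul_mem' := by
    intro c x hx
    have := W.smul_mem ((starRingEnd ℂ) c) hx
    have h : (fun i : Fin 11 => (starRingEnd ℂ) ((c • x) i)) =
        (starRingEnd ℂ) c • fun i => (starRingEnd ℂ) (x i) := by
      funext i; simp
    simpa [Set.mem_setOf_eq, h]

/-- The real vectors in `ℂ¹¹`, i.e. the real form `ℝ^{10,1}`, as an `ℝ`-subspace. -/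
noncomputable def realSub : Submodule ℝ (Fin 11 → ℂ) where
  carrier := {x | ∀ i, (x i).im = 0}
  zero_mem' := by intro i; simp
  add_mem' := by intro a b ha hb i; simp [ha i, hb i]
  smul_mem' := by intro r x hx i; simp [Complex.smul_im, hx i]

/-- `E(W) = (W + W̄) ∩ ℝ^{10,1}`. -/
noncomputable def EW (W : Submodule ℂ (Fin 11 → ℂ)) : Submodule ℝ (Fin 11 → ℂ) :=
  (Submodule.restrictScalars ℝ (W ⊔ conjSub W)) ⊓ realSub

open Complex

/- ### Auxiliary definitions and lemmas -/

noncomputable def Herm (x y : Fin 11 → ℂ) : ℂ :=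
  ∑ i : Fin 11, (if (i : ℕ) < 10 then (1 : ℂ) else -1) * (starRingEnd ℂ) (x i) * y i

lemma BLor_symm (x y : Fin 11 → ℂ) : BLor x y = BLor y x := by
  unfold BLor; congr 1; funext i; ring

lemma BLor_add_right (x y z : Fin 11 → ℂ) : BLor x (y + z) = BLor x y + BLor x z := by
  unfold BLor; rw [← Finset.sum_add_distrib]; congr 1; funext i
  by_cases h : (i : ℕ) < 10 <;> simp [h] <;> ring

lemma BLor_smul_right (c : ℂ) (x y : Fin 11 → ℂ) : BLor x (c • y) = c * BLor x y := by
  unfold BLor; rw [Finset.mul_sum]; congr 1; funext i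
  by_cases h : (i : ℕ) < 10 <;> simp [h] <;> ring

lemma BLor_smul_left (c : ℂ) (x y : Fin 11 → ℂ) : BLor (c • x) y = c * BLor x y := by
  rw [BLor_symm, BLor_smul_right, BLor_symm]

lemma BLor_conj (x y : Fin 11 → ℂ) :
    BLor (fun i => (starRingEnd ℂ) (x i)) (fun i => (starRingEnd ℂ) (y i)) =
      (starRingEnd ℂ) (BLor x y) := by
  unfold BLor; rw [map_sum]; congr 1; funext i
  by_cases h : (i : ℕ) < 10 <;> simp [h]

lemma Herm_eq_BLor (x y : Fin 11 → ℂ) (hx : ∀ i, (x i).im = 0) : Herm x y = BLor x y := by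
  unfold Herm BLor; congr 1; funext i
  rw [Complex.conj_eq_iff_im.2 (hx i)]

lemma BLor_real_im (x y : Fin 11 → ℂ) (hx : ∀ i, (x i).im = 0) (hy : ∀ i, (y i).im = 0) :
    (BLor x y).im = 0 := by
  unfold BLor
  rw [Complex.im_sum]
  refine Finset.sum_eq_zero fun i _ => ?_
  by_cases h : (i : ℕ) < 10 <;> simp [h, Complex.mul_im, hx i, hy i]

noncomputable def Ttr (x : Fin 11 → ℂ) : EuclideanSpace ℂ (Fin 10) := WithLp.toLp 2 (fun j => x j.castSucc)

local notation "⟪" a ", " b "⟫" => @inner ℂ _ _ a b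

lemma Herm_split (x y : Fin 11 → ℂ) :
    Herm x y = ⟪Ttr x, Ttr y⟫ - (starRingEnd ℂ) (x (Fin.last 10)) * y (Fin.last 10) := by
  unfold Herm Ttr
  rw [Fin.sum_univ_castSucc
    (f := fun i : Fin 11 => (if (i : ℕ) < 10 then (1 : ℂ) else -1) * (starRingEnd ℂ) (x i) * y i)]
  rw [PiLp.inner_apply]
  simp [Fin.is_lt, RCLike.inner_apply]
  rw [Finset.sum_congr rfl (fun _ _ => mul_comm _ _)]
  ring

lemma Herm_self_re (z : Fin 11 → ℂ) :
    (Herm z z).re = ‖Ttr z‖^2 - ‖z (Fin.last 10)‖^2 := by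
  have h := Herm_split z z
  have h1 : ⟪Ttr z, Ttr z⟫ = ((‖Ttr z‖^2 : ℝ) : ℂ) := by
    exact_mod_cast inner_self_eq_norm_sq_to_K (𝕜 := ℂ) (Ttr z)
  have h2 : (starRingEnd ℂ) (z (Fin.last 10)) * z (Fin.last 10)
      = ((‖z (Fin.last 10)‖^2 : ℝ) : ℂ) := by
    rw [Complex.conj_mul']
    norm_cast
  rw [h, h1, h2]
  simp [← Complex.ofReal_pow]

lemma lemA (x y : Fin 11 → ℂ) (hxx : (Herm x x).re ≤ 0) (hyy : (Herm y y).re ≤ 0)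
    (hxy : Herm x y = 0) (hy : y ≠ 0) : ∃ c : ℂ, x = c • y := by
  set x10 := x (Fin.last 10) with hx10def
  set y10 := y (Fin.last 10) with hy10def
  have hnx : ‖Ttr x‖ ≤ ‖x10‖ := by
    have := Herm_self_re x
    nlinarith [norm_nonneg (Ttr x), norm_nonneg x10]
  have hny : ‖Ttr y‖ ≤ ‖y10‖ := by
    have := Herm_self_re y
    nlinarith [norm_nonneg (Ttr y), norm_nonneg y10]
  have hin : ⟪Ttr x, Ttr y⟫ = (starRingEnd ℂ) x10 * y10 := by
    have := Herm_split x y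
    rw [hxy] at this
    linear_combination -this
  by_cases hy10 : y10 = 0
  · exfalso
    apply hy
    have hTy : Ttr y = 0 := by
      have : ‖Ttr y‖ ≤ 0 := by rw [hy10] at hny; simpa using hny
      have := norm_nonneg (Ttr y)
      exact norm_eq_zero.mp (le_antisymm ‹‖Ttr y‖ ≤ 0› this)
    funext i
    refine Fin.lastCases ?_ ?_ i
    · exact hy10
    · intro j
      have := congrArg (fun v : EuclideanSpace ℂ (Fin 10) => v j) hTy
      simpa [Ttr] using this
  by_cases hx10 : x10 = 0
  · have hTx : Ttr x = 0 := by
      have : ‖Ttr x‖ ≤ 0 := by rw [hx10] at hnx; simpa using hnx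
      exact norm_eq_zero.mp (le_antisymm this (norm_nonneg _))
    refine ⟨0, ?_⟩
    funext i
    refine Fin.lastCases ?_ ?_ i
    · simp only [zero_smul, Pi.zero_apply]; exact hx10
    · intro j
      have := congrArg (fun v : EuclideanSpace ℂ (Fin 10) => v j) hTx
      simpa [Ttr] using this
  have hTy : Ttr y ≠ 0 := by
    intro h
    rw [h, inner_zero_right] at hin
    rcases mul_eq_zero.mp hin.symm with h' | h'
    · exact hx10 (by simpa using h')
    · exact hy10 h'
  have hTx : Ttr x ≠ 0 := by
    intro h
    rw [h, inner_zero_left] at hin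
    rcases mul_eq_zero.mp hin.symm with h' | h'
    · exact hx10 (by simpa using h')
    · exact hy10 h'
  have hnormin : ‖⟪Ttr x, Ttr y⟫‖ = ‖Ttr x‖ * ‖Ttr y‖ := by
    have h1 : ‖⟪Ttr x, Ttr y⟫‖ = ‖x10‖ * ‖y10‖ := by
      rw [hin]; simp
    have h2 : ‖⟪Ttr x, Ttr y⟫‖ ≤ ‖Ttr x‖ * ‖Ttr y‖ := norm_inner_le_norm _ _
    have h3 : ‖Ttr x‖ * ‖Ttr y‖ ≤ ‖x10‖ * ‖y10‖ :=
      mul_le_mul hnx hny (norm_nonneg _) (norm_nonneg _)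
    linarith [h1 ▸ h2, h3]
  obtain ⟨r, hr0, hr⟩ := (norm_inner_eq_norm_iff hTx hTy).mp hnormin
  have h3 : ‖Ttr x‖ * ‖Ttr y‖ = ‖x10‖ * ‖y10‖ := by rw [← hnormin, hin]; simp
  have hxineq : ‖Ttr x‖ = ‖x10‖ := by
    nlinarith [norm_pos_iff.mpr hTx, norm_pos_iff.mpr hTy, hnx, hny]
  have hy10x : y10 = r * x10 := by
    have h1 : ⟪Ttr x, Ttr y⟫ = r * ((‖Ttr x‖ : ℂ))^2 := by
      rw [hr, inner_smul_right, inner_self_eq_norm_sq_to_K]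
      norm_num
    have h2 : ((‖Ttr x‖ : ℂ))^2 = (starRingEnd ℂ) x10 * x10 := by
      rw [hxineq, Complex.conj_mul']
    have h4 : (starRingEnd ℂ) x10 * y10 = r * ((starRingEnd ℂ) x10 * x10) := by
      rw [← h2, ← h1, hin]
    have hc : (starRingEnd ℂ) x10 ≠ 0 := by
      simpa using hx10
    apply mul_left_cancel₀ hc
    rw [h4]; ring
  refine ⟨r⁻¹, ?_⟩
  funext i
  refine Fin.lastCases ?_ (fun j => ?_) i
  · show x10 = (r⁻¹ • y) (Fin.last 10)
    rw [Pi.smul_apply, smul_eq_mul, ← hy10def, hy10x]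
    field_simp
  · have hj := congrArg (fun v : EuclideanSpace ℂ (Fin 10) => v j) hr
    simp [Ttr, Pi.smul_apply, smul_eq_mul] at hj
    show x (Fin.castSucc j) = r⁻¹ * y (Fin.castSucc j)
    rw [hj]
    field_simp

lemma mem_realSub {x : Fin 11 → ℂ} : x ∈ realSub ↔ ∀ i, (x i).im = 0 := Iff.rfl

lemma mem_conjSub {W : Submodule ℂ (Fin 11 → ℂ)} {x : Fin 11 → ℂ} :
    x ∈ conjSub W ↔ (fun i => (starRingEnd ℂ) (x i)) ∈ W := Iff.rfl

lemma finrank_realPts (U : Submodule ℂ (Fin 11 → ℂ))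
    (hU : ∀ x ∈ U, (fun i => (starRingEnd ℂ) (x i)) ∈ U) :
    Module.finrank ℝ ↥(Submodule.restrictScalars ℝ U ⊓ realSub) = Module.finrank ℂ U := by
  classical
  set P := Submodule.restrictScalars ℝ U ⊓ realSub with hP
  have hmem : ∀ p : ↥P × ↥P,
      (p.1 : Fin 11 → ℂ) + Complex.I • (p.2 : Fin 11 → ℂ) ∈ Submodule.restrictScalars ℝ U :=
    fun p => Submodule.add_mem _ p.1.2.1 (U.smul_mem Complex.I p.2.2.1)
  let f : (↥P × ↥P) →ₗ[ℝ] ↥(Submodule.restrictScalars ℝ U) :=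
    { toFun := fun p => ⟨(p.1 : Fin 11 → ℂ) + Complex.I • (p.2 : Fin 11 → ℂ), hmem p⟩
      map_add' := by
        intro a b
        ext1
        push_cast
        simp only [Submodule.coe_add, Prod.fst_add, Prod.snd_add]
        module
      map_smul' := by
        intro r a
        ext1
        push_cast
        simp only [Submodule.coe_smul, Prod.smul_fst, Prod.smul_snd, RingHom.id_apply]
        rw [smul_comm]
        simp only [id]
        module }
  have hinj : Function.Injective f := by
    intro a b hab
    have h : ((a.1 : Fin 11 → ℂ) - b.1) + Complex.I • ((a.2 : Fin 11 → ℂ) - b.2) = 0 := by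
      have := congrArg (Subtype.val) hab
      simp only [f, LinearMap.coe_mk, AddHom.coe_mk] at this
      rw [smul_sub]
      abel_nf
      linear_combination (norm := module) this
    have key : ∀ i, ((a.1 : Fin 11 → ℂ) i - (b.1 : Fin 11 → ℂ) i) = 0 ∧
        ((a.2 : Fin 11 → ℂ) i - (b.2 : Fin 11 → ℂ) i) = 0 := by
      intro i
      have hi := congrFun h i
      set A := (a.1 : Fin 11 → ℂ) i - (b.1 : Fin 11 → ℂ) i with hA
      set C := (a.2 : Fin 11 → ℂ) i - (b.2 : Fin 11 → ℂ) i with hC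
      have hi' : A + Complex.I * C = 0 := by
        simpa [hA, hC, Pi.add_apply, Pi.sub_apply, Pi.smul_apply, smul_eq_mul, mul_sub] using hi
      have hAim : A.im = 0 := by simp [hA, Complex.sub_im, a.1.2.2 i, b.1.2.2 i]
      have hCim : C.im = 0 := by simp [hC, Complex.sub_im, a.2.2.2 i, b.2.2.2 i]
      have hre := congrArg Complex.re hi'
      have him := congrArg Complex.im hi'
      simp [Complex.add_re, Complex.add_im, Complex.mul_re, Complex.mul_im, hAim, hCim] at hre him
      exact ⟨Complex.ext hre hAim, Complex.ext him hCim⟩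
    have h1 : a.1 = b.1 := by
      ext1; funext i; have := (key i).1; exact sub_eq_zero.mp this
    have h2 : a.2 = b.2 := by
      ext1; funext i; have := (key i).2; exact sub_eq_zero.mp this
    exact Prod.ext h1 h2
  have hsurj : Function.Surjective f := by
    rintro ⟨z, hz⟩
    have hzU : z ∈ U := hz
    set az : Fin 11 → ℂ := fun i => ((z i).re : ℂ) with haz
    set bz : Fin 11 → ℂ := fun i => ((z i).im : ℂ) with hbz
    have hazU : az ∈ U := by
      have : az = (2⁻¹ : ℂ) • (z + fun i => (starRingEnd ℂ) (z i)) := by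
        funext i
        simp only [haz, Pi.smul_apply, Pi.add_apply, smul_eq_mul]
        rw [Complex.add_conj]
        push_cast
        ring
      rw [this]
      exact U.smul_mem _ (U.add_mem hzU (hU z hzU))
    have hbzU : bz ∈ U := by
      have : bz = (-(2⁻¹) * Complex.I : ℂ) • (z - fun i => (starRingEnd ℂ) (z i)) := by
        funext i
        simp only [hbz, Pi.smul_apply, Pi.sub_apply, smul_eq_mul]
        rw [Complex.sub_conj]
        push_cast
        linear_combination ((((z i).im : ℂ))) * Complex.I_mul_I
      rw [this]
      exact U.smul_mem _ (U.sub_mem hzU (hU z hzU))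
    refine ⟨⟨⟨az, hazU, fun i => by simp [haz]⟩, ⟨bz, hbzU, fun i => by simp [hbz]⟩⟩, ?_⟩
    ext1
    simp only [f, LinearMap.coe_mk, AddHom.coe_mk]
    funext i
    simp only [Pi.add_apply, Pi.smul_apply, smul_eq_mul, haz, hbz]
    rw [mul_comm]
    exact Complex.re_add_im (z i)
  have e := LinearEquiv.ofBijective f ⟨hinj, hsurj⟩
  have hfr := LinearEquiv.finrank_eq e
  rw [Module.finrank_prod] at hfr
  have hres : Module.finrank ℝ (Submodule.restrictScalars ℝ U) = 2 * Module.finrank ℂ U := by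
    have := Module.finrank_mul_finrank ℝ ℂ ↥U
    rw [Complex.finrank_real_complex] at this
    exact this.symm
  rw [hres] at hfr
  omega

noncomputable def conjL : (Fin 11 → ℂ) ≃ₗ[ℝ] (Fin 11 → ℂ) where
  toFun x := fun i => (starRingEnd ℂ) (x i)
  invFun x := fun i => (starRingEnd ℂ) (x i)
  map_add' a b := by funext i; simp
  map_smul' r a := by
    funext i
    simp [Complex.real_smul]
  left_inv x := by funext i; simp
  right_inv x := by funext i; simp

lemma restrict_conjSub (W : Submodule ℂ (Fin 11 → ℂ)) :
    Submodule.restrictScalars ℝ (conjSub W) =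
      Submodule.map (conjL : (Fin 11 → ℂ) →ₗ[ℝ] (Fin 11 → ℂ))
        (Submodule.restrictScalars ℝ W) := by
  ext x
  constructor
  · intro hx
    exact ⟨fun i => (starRingEnd ℂ) (x i), hx, by funext i; simp [conjL]⟩
  · rintro ⟨w, hw, rfl⟩
    show (fun i => (starRingEnd ℂ) (conjL w i)) ∈ W
    have : (fun i => (starRingEnd ℂ) (conjL w i)) = w := by funext i; simp [conjL]
    rw [this]; exact hw

lemma finrank_conjSub (W : Submodule ℂ (Fin 11 → ℂ)) :
    Module.finrank ℂ ↥(conjSub W) = Module.finrank ℂ W := by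
  have h1 : Module.finrank ℝ (Submodule.restrictScalars ℝ (conjSub W)) =
      Module.finrank ℝ (Submodule.restrictScalars ℝ W) := by
    rw [restrict_conjSub]
    exact LinearEquiv.finrank_map_eq conjL _
  have h2 : ∀ U : Submodule ℂ (Fin 11 → ℂ),
      Module.finrank ℝ (Submodule.restrictScalars ℝ U) = 2 * Module.finrank ℂ U := by
    intro U
    have := Module.finrank_mul_finrank ℝ ℂ ↥U
    rw [Complex.finrank_real_complex] at this
    exact this.symm
  rw [h2, h2] at h1
  omega

lemma double_conj (x : Fin 11 → ℂ) :
    (fun i => (starRingEnd ℂ) ((fun j => (starRingEnd ℂ) (x j)) i)) = x := by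
  funext i; simp

/-- For a 2-dimensional isotropic `W ⊆ ℂ¹¹` with `dim_ℂ (W ∩ W̄) = 1`, the Lorentz form
restricted to the 3-dimensional real space `E(W) = (W + W̄) ∩ ℝ^{10,1}` is degenerate,
with radical the real isotropic line underlying `W ∩ W̄`, and positive semidefinite with
null vectors exactly the radical; i.e. it has signature `(2,0)` with 1-dimensional kernel. -/

theorem stmt10 (W : Submodule ℂ (Fin 11 → ℂ))
    (hdim : Module.finrank ℂ W = 2)
    (hiso : ∀ w ∈ W, ∀ w' ∈ W, BLor w w' = 0)
    (hint : Module.finrank ℂ ↥(W ⊓ conjSub W) = 1) :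
    Module.finrank ℝ ↥(EW W) = 3 ∧
    -- the restricted form is real-valued and positive semidefinite on `E(W)`
    (∀ x ∈ EW W, (BLor x x).im = 0 ∧ 0 ≤ (BLor x x).re) ∧
    -- the radical of the restricted form is the real line underlying `W ∩ W̄`
    (∀ x ∈ EW W, ((∀ y ∈ EW W, BLor x y = 0) ↔ x ∈ W ⊓ conjSub W)) ∧
    Module.finrank ℝ ↥(EW W ⊓ Submodule.restrictScalars ℝ (W ⊓ conjSub W)) = 1 ∧
    -- the induced form on the quotient by the radical is positive definite
    (∀ x ∈ EW W, BLor x x = 0 → ∀ y ∈ EW W, BLor x y = 0) := by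
  classical
  -- conjugation stability of the sup and the inf
  have hsupstable : ∀ x ∈ W ⊔ conjSub W,
      (fun i => (starRingEnd ℂ) (x i)) ∈ W ⊔ conjSub W := by
    intro x hx
    rcases Submodule.mem_sup.mp hx with ⟨w, hw, v, hv, rfl⟩
    have h1 : (fun i => (starRingEnd ℂ) ((w + v) i)) =
        (fun i => (starRingEnd ℂ) (w i)) + fun i => (starRingEnd ℂ) (v i) := by
      funext i; simp
    rw [h1]
    refine Submodule.add_mem _ (Submodule.mem_sup_right ?_) (Submodule.mem_sup_left ?_)
    · show (fun i => (starRingEnd ℂ) ((fun j => (starRingEnd ℂ) (w j)) i)) ∈ W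
      rw [double_conj]; exact hw
    · exact hv
  have hinfstable : ∀ x ∈ W ⊓ conjSub W,
      (fun i => (starRingEnd ℂ) (x i)) ∈ W ⊓ conjSub W := by
    intro x hx
    refine ⟨hx.2, ?_⟩
    show (fun i => (starRingEnd ℂ) ((fun j => (starRingEnd ℂ) (x j)) i)) ∈ W
    rw [double_conj]; exact hx.1
  -- the radical property
  have hrad : ∀ x ∈ W ⊓ conjSub W, ∀ z ∈ W ⊔ conjSub W, BLor x z = 0 := by
    intro x hx z hz
    rcases Submodule.mem_sup.mp hz with ⟨w, hw, v, hv, rfl⟩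
    rw [BLor_add_right]
    have h1 : BLor x w = 0 := hiso x hx.1 w hw
    have h2 : BLor x v = 0 := by
      have := hiso _ hx.2 _ hv
      rw [BLor_conj] at this
      simpa using this
    rw [h1, h2]; ring
  -- a real nonzero element of W ⊓ conjSub W
  obtain ⟨ℓ, hℓWW, hℓreal, hℓ0⟩ :
      ∃ ℓ : Fin 11 → ℂ, ℓ ∈ W ⊓ conjSub W ∧ (∀ i, (ℓ i).im = 0) ∧ ℓ ≠ 0 := by
    have hpos : 0 < Module.finrank ℂ ↥(W ⊓ conjSub W) := by rw [hint]; norm_num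
    haveI : Nontrivial ↥(W ⊓ conjSub W) := Module.nontrivial_of_finrank_pos hpos
    obtain ⟨v, hv0⟩ := exists_ne (0 : ↥(W ⊓ conjSub W))
    have hvne : (v : Fin 11 → ℂ) ≠ 0 := by
      simpa [Submodule.coe_eq_zero] using hv0
    set vc : Fin 11 → ℂ := fun i => (starRingEnd ℂ) ((v : Fin 11 → ℂ) i) with hvc
    have hvcW : vc ∈ W ⊓ conjSub W := hinfstable _ v.2
    by_cases ha : (v : Fin 11 → ℂ) + vc = 0
    · refine ⟨Complex.I • ((v : Fin 11 → ℂ) - vc), Submodule.smul_mem _ _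
        (Submodule.sub_mem _ v.2 hvcW), ?_, ?_⟩
      · intro i
        have h0 := congrFun ha i
        simp only [Pi.add_apply, hvc] at h0
        simp only [Pi.smul_apply, Pi.sub_apply, smul_eq_mul, hvc]
        have : ((v : Fin 11 → ℂ) i).re = 0 := by
          have := congrArg Complex.re h0
          simp [Complex.add_re] at this
          linarith
        simp [Complex.mul_im, Complex.sub_re, this]
      · intro h0
        apply hvne
        funext i
        have h1 := congrFun h0 i
        have h2 := congrFun ha i
        simp only [Pi.smul_apply, Pi.sub_apply, smul_eq_mul, Pi.zero_apply, hvc,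
          Pi.add_apply] at h1 h2
        have hIne : (Complex.I : ℂ) ≠ 0 := Complex.I_ne_zero
        have h3 : (v : Fin 11 → ℂ) i - (starRingEnd ℂ) ((v : Fin 11 → ℂ) i) = 0 := by
          rcases mul_eq_zero.mp h1 with h | h
          · exact absurd h hIne
          · exact h
        have : (2 : ℂ) * (v : Fin 11 → ℂ) i = 0 := by linear_combination h2 + h3
        simpa using this
    · refine ⟨(v : Fin 11 → ℂ) + vc, Submodule.add_mem _ v.2 hvcW, ?_, ha⟩
      intro i
      simp [hvc, Pi.add_apply, Complex.add_im]
  have hℓE : ℓ ∈ EW W :=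
    ⟨Submodule.mem_sup_left hℓWW.1, hℓreal⟩
  -- the key dependence lemma specialized
  have hdep : ∀ x ∈ EW W, (BLor x x).re ≤ 0 → (BLor x x).im = 0 → ∃ c : ℂ, x = c • ℓ := by
    intro x hx hre him
    have hxreal : ∀ i, (x i).im = 0 := hx.2
    apply lemA
    · rw [Herm_eq_BLor x x hxreal]; exact hre
    · rw [Herm_eq_BLor ℓ ℓ hℓreal, hiso ℓ hℓWW.1 ℓ hℓWW.1]; norm_num
    · rw [Herm_eq_BLor x ℓ hxreal, BLor_symm]
      exact hrad ℓ hℓWW x hx.1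
    · exact hℓ0
  -- BLor vanishes on multiples of ℓ
  have hcl0 : ∀ c : ℂ, BLor (c • ℓ) (c • ℓ) = 0 := by
    intro c
    rw [BLor_smul_left, BLor_smul_right, hiso ℓ hℓWW.1 ℓ hℓWW.1]
    ring
  -- Part 2 : real-valued and positive semidefinite
  have part2 : ∀ x ∈ EW W, (BLor x x).im = 0 ∧ 0 ≤ (BLor x x).re := by
    intro x hx
    have him : (BLor x x).im = 0 := BLor_real_im x x hx.2 hx.2
    refine ⟨him, ?_⟩
    by_contra hneg
    push_neg at hneg
    obtain ⟨c, hc⟩ := hdep x hx (le_of_lt hneg) him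
    rw [hc, hcl0] at hneg
    simp at hneg
  -- Part 3 : radical is W ⊓ conjSub W
  have part3 : ∀ x ∈ EW W, ((∀ y ∈ EW W, BLor x y = 0) ↔ x ∈ W ⊓ conjSub W) := by
    intro x hx
    constructor
    · intro h0
      have hxx : BLor x x = 0 := h0 x hx
      obtain ⟨c, hc⟩ := hdep x hx (by rw [hxx]; norm_num) (by rw [hxx]; norm_num)
      rw [hc]
      exact Submodule.smul_mem _ _ hℓWW
    · intro hxWW y hy
      exact hrad x hxWW y hy.1
  -- Part 5 : null vectors are in the radical
  have part5 : ∀ x ∈ EW W, BLor x x = 0 → ∀ y ∈ EW W, BLor x y = 0 := by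
    intro x hx hxx y hy
    obtain ⟨c, hc⟩ := hdep x hx (by rw [hxx]; norm_num) (by rw [hxx]; norm_num)
    have : x ∈ W ⊓ conjSub W := by
      rw [hc]; exact Submodule.smul_mem _ _ hℓWW
    exact hrad x this y hy.1
  -- Part 1 : dimension of E(W)
  have hsupdim : Module.finrank ℂ ↥(W ⊔ conjSub W) = 3 := by
    have hG := Submodule.finrank_sup_add_finrank_inf_eq W (conjSub W)
    rw [hdim, hint, finrank_conjSub, hdim] at hG
    omega
  have part1 : Module.finrank ℝ ↥(EW W) = 3 := by
    have : Module.finrank ℝ ↥(EW W) = Module.finrank ℂ ↥(W ⊔ conjSub W) :=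
      finrank_realPts _ hsupstable
    rw [this, hsupdim]
  -- Part 4 : dimension of the radical inside E(W)
  have part4 : Module.finrank ℝ ↥(EW W ⊓ Submodule.restrictScalars ℝ (W ⊓ conjSub W)) = 1 := by
    have heq : EW W ⊓ Submodule.restrictScalars ℝ (W ⊓ conjSub W) =
        Submodule.restrictScalars ℝ (W ⊓ conjSub W) ⊓ realSub := by
      ext x
      constructor
      · rintro ⟨⟨_, hreal⟩, hinf⟩
        exact ⟨hinf, hreal⟩
      · rintro ⟨hinf, hreal⟩
        exact ⟨⟨Submodule.mem_sup_left hinf.1, hreal⟩, hinf⟩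
    rw [heq, finrank_realPts _ hinfstable, hint]
  exact ⟨part1, part2, part3, part4, part5⟩
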